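/- Let $a$ be an even positive integer. For each $n \ge 1$ and $1 \le i \le n$, let $t_i = \frac{i}{n} - \frac{1}{2n}$ and define $D_i^{(a)} = i \binom{n}{i} \int_0^1 |x - t_i|^a \, x^{i-1} (1-x)^{n-i} \, dx$ (the expected $a$-th power of the distance from the $i$-th order statistic of $n$ i.i.d. uniform points on $[0,1]$ to the anchor $t_i$). Then $\sum_{i=1}^{n} D_i^{(a)} = \frac{(a/2)!}{2^{a/2}(1+a)} \cdot \frac{1}{n^{a/2-1}} + O\left(\frac{1}{n^{a/2}}\right)$; that is, there exist a constant $C > 0$ and $N$ such that for all $n \ge N$, $\left| \sum_{i=1}^{n} D_i^{(a)} - \frac{(a/2)!}{2^{a/2}(1+a)} n^{1-a/2} \right| \le C \, n^{-a/2}$. -/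

import Mathlib

open Polynomial Finset intervalIntegral

namespace Stmt1Aux

noncomputable def g : ℕ → ℕ → Polynomial ℝ
  | 0, 0 => 1
  | 0, _+1 => 0
  | 1, _ => 0
  | (k+2), 0 => X * (1-X) * derivative (g (k+1) 0)
  | (k+2), (j+1) => X * (1-X) * (derivative (g (k+1) (j+1)) + C ((k:ℝ)+1) * g k j)

noncomputable def P (N k : ℕ) : Polynomial ℝ :=
  ∑ b ∈ range (N+1),
    C ((N.choose b : ℕ) : ℝ) * (X^b * (1-X)^(N-b) * (C (b:ℝ) - C (N:ℝ) * X)^k)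

def DD : ℕ → ℝ
  | 0 => 1
  | m+1 => (2*m+1) * DD m


lemma hXpow (b : ℕ) : X * (C (b:ℝ) * X^(b-1)) = C (b:ℝ) * X^b := by
  cases b with
  | zero => simp
  | succ b => rw [Nat.succ_sub_one]; ring_nf

lemma hYpow (c : ℕ) : (1-X) * (C (c:ℝ) * (1-X)^(c-1)) = C (c:ℝ) * (1-X)^c := by
  cases c with
  | zero => simp
  | succ c => rw [Nat.succ_sub_one]; ring_nf

lemma term_deriv (b c k : ℕ) :
    X * (1-X) * derivative (X^b * (1-X)^c * (C (b:ℝ) - C ((b:ℝ)+(c:ℝ)) * X)^k)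
      = X^b * (1-X)^c * (C (b:ℝ) - C ((b:ℝ)+(c:ℝ)) * X)^(k+1)
        - C ((k:ℝ) * ((b:ℝ)+(c:ℝ))) * (X * (1-X))
            * (X^b * (1-X)^c * (C (b:ℝ) - C ((b:ℝ)+(c:ℝ)) * X)^(k-1)) := by
  have h1 : derivative ((1-X)^c : ℝ[X]) = - (C (c:ℝ) * (1-X)^(c-1)) := by
    rw [derivative_pow]; simp [mul_comm]
  have h2 : derivative ((C (b:ℝ) - C ((b:ℝ)+(c:ℝ)) * X)^k)
      = - (C ((k:ℝ) * ((b:ℝ)+(c:ℝ))) * (C (b:ℝ) - C ((b:ℝ)+(c:ℝ)) * X)^(k-1)) := by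
    rw [derivative_pow]; simp; ring
  rw [derivative_mul, derivative_mul, derivative_X_pow, h1, h2]
  have e1 := hXpow b
  have e2 := hYpow c
  have key : X * (1-X) * ((C (b:ℝ) * X^(b-1)) * (1-X)^c + X^b * (-(C (c:ℝ) * (1-X)^(c-1))))
      = (C (b:ℝ) - C ((b:ℝ)+(c:ℝ)) * X) * (X^b * (1-X)^c) := by
    have : X * (1-X) * ((C (b:ℝ) * X^(b-1)) * (1-X)^c + X^b * (-(C (c:ℝ) * (1-X)^(c-1))))
        = (X * (C (b:ℝ) * X^(b-1))) * ((1-X) * (1-X)^c)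
          - (X * X^b) * ((1-X) * (C (c:ℝ) * (1-X)^(c-1))) := by ring
    rw [this, e1, e2]
    have hb : ((1-X) * (1-X)^c : ℝ[X]) = (1-X)^(c+1) := (pow_succ' _ _).symm
    rw [hb]
    have : (C (b:ℝ) - C ((b:ℝ)+(c:ℝ)) * X) = C (b:ℝ) * (1 - X) - C (c:ℝ) * X := by
      rw [map_add]; ring
    rw [this]; ring_nf
  calc X * (1-X) * (((C (b:ℝ) * X^(b-1)) * (1-X)^c + X^b * (-(C (c:ℝ) * (1-X)^(c-1)))) * (C (b:ℝ) - C ((b:ℝ)+(c:ℝ)) * X)^k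
        + X^b * (1-X)^c * (-(C ((k:ℝ) * ((b:ℝ)+(c:ℝ))) * (C (b:ℝ) - C ((b:ℝ)+(c:ℝ)) * X)^(k-1))))
      = (X * (1-X) * ((C (b:ℝ) * X^(b-1)) * (1-X)^c + X^b * (-(C (c:ℝ) * (1-X)^(c-1))))) * (C (b:ℝ) - C ((b:ℝ)+(c:ℝ)) * X)^k
        - C ((k:ℝ) * ((b:ℝ)+(c:ℝ))) * (X * (1-X)) * (X^b * (1-X)^c * (C (b:ℝ) - C ((b:ℝ)+(c:ℝ)) * X)^(k-1)) := by
        ring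
    _ = _ := by rw [key]; rw [pow_succ]; ring


lemma P_rec (N k : ℕ) :
    P N (k+1) = X * (1-X) * derivative (P N k)
      + C ((k:ℝ) * (N:ℝ)) * (X * (1-X)) * P N (k-1) := by
  unfold P
  rw [derivative_sum, Finset.mul_sum, Finset.mul_sum, ← Finset.sum_add_distrib]
  refine Finset.sum_congr rfl (fun b hb => ?_)
  have hbN : b ≤ N := Nat.lt_succ_iff.mp (Finset.mem_range.mp hb)
  have hcast : (b:ℝ) + ((N-b:ℕ):ℝ) = (N:ℝ) := by
    push_cast [Nat.cast_sub hbN]; ring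
  have := term_deriv b (N-b) k
  rw [hcast] at this
  rw [derivative_C_mul]
  rw [show X * (1-X) * (C ((N.choose b : ℕ) : ℝ) * derivative (X ^ b * (1 - X) ^ (N - b) * (C (b:ℝ) - C (N:ℝ) * X) ^ k))
      = C ((N.choose b : ℕ) : ℝ) * (X * (1-X) * derivative (X ^ b * (1 - X) ^ (N - b) * (C (b:ℝ) - C (N:ℝ) * X) ^ k)) by ring,
    this]
  ring

lemma P_zero (N : ℕ) : P N 0 = 1 := by
  unfold P
  have := add_pow (X : ℝ[X]) (1 - X) N
  simp only [add_sub_cancel, one_pow] at this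
  conv_rhs => rw [this]
  exact Finset.sum_congr rfl fun b hb => by rw [Polynomial.C_eq_natCast]; ring


lemma g_vanish : ∀ k j : ℕ, k < 2*j → g k j = 0 := by
  intro k
  induction k using Nat.strong_induction_on with
  | _ k ih =>
    match k with
    | 0 => intro j hj; match j, hj with | j+1, _ => rfl
    | 1 => intro j hj; rfl
    | (k+2) =>
      intro j hj
      match j, hj with
      | j+1, hj =>
        show X * (1-X) * (derivative (g (k+1) (j+1)) + C ((k:ℝ)+1) * g k j) = 0
        rw [ih (k+1) (by omega) (j+1) (by omega), ih k (by omega) j (by omega)]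
        simp


lemma g_top (m : ℕ) : g (2*m) m = C (DD m) * (X * (1-X))^m := by
  induction m with
  | zero => show g 0 0 = _; simp [g, DD]
  | succ m ih =>
    have h2 : 2*(m+1) = (2*m)+2 := by ring
    rw [h2]
    show X * (1-X) * (derivative (g (2*m+1) (m+1)) + C (((2*m:ℕ):ℝ)+1) * g (2*m) m) = _
    rw [g_vanish (2*m+1) (m+1) (by omega), ih]
    simp only [derivative_zero, zero_add, DD]
    rw [map_mul]
    push_cast
    ring

lemma g_one (j : ℕ) : g 1 j = 0 := by cases j <;> rfl


lemma P_eq_sum_g (k N : ℕ) :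
    P N k = ∑ j ∈ range (k+1), C (((N:ℝ))^j) * g k j := by
  induction k using Nat.strong_induction_on with
  | _ k ih =>
    match k with
    | 0 => simp [P_zero]; rfl
    | 1 =>
      have h := P_rec N 0
      simp only [Nat.cast_zero, zero_mul, map_zero, zero_mul, P_zero, derivative_one,
        mul_zero, add_zero, zero_add] at h
      rw [h]
      simp [g_one]
    | (k+2) =>
      have h := P_rec N (k+1)
      simp only [Nat.add_sub_cancel] at h
      rw [h, ih (k+1) (by omega), ih k (by omega)]
      -- RHS
      conv_rhs => rw [Finset.sum_range_succ']
      have hlast : ∑ j ∈ range (k+2), C ((N:ℝ)^(j+1)) * g (k+2) (j+1)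
          = ∑ j ∈ range (k+1), C ((N:ℝ)^(j+1)) * g (k+2) (j+1) := by
        rw [Finset.sum_range_succ, g_vanish (k+2) (k+2) (by omega), mul_zero, add_zero]
      rw [hlast]
      have hg0 : g (k+2) 0 = X * (1-X) * derivative (g (k+1) 0) := rfl
      have hgj : ∀ j, g (k+2) (j+1)
          = X * (1-X) * (derivative (g (k+1) (j+1)) + C ((k:ℝ)+1) * g k j) := fun j => rfl
      -- LHS
      rw [derivative_sum]
      simp only [derivative_C_mul]
      conv_lhs => rw [Finset.sum_range_succ']
      simp only [hg0, hgj]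
      rw [mul_add, Finset.mul_sum, Finset.mul_sum, add_right_comm, ← Finset.sum_add_distrib]
      congr 1
      · refine Finset.sum_congr rfl fun j hj => ?_
        simp only [pow_succ, map_mul]
        push_cast
        ring
      · ring

lemma beta_integral (r p : ℕ) :
    ∫ x in (0:ℝ)..1, x^p * (1-x)^r
      = (p.factorial : ℝ) * (r.factorial : ℝ) / ((p+r+1).factorial : ℝ) := by
  induction r generalizing p with
  | zero =>
    simp only [pow_zero, mul_one, integral_pow, Nat.factorial]
    push_cast
    rw [one_pow]
    rw [div_eq_div_iff (by positivity) (by positivity)]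
    ring
  | succ r ih =>
    have hsplit : ∀ x : ℝ, x^p * (1-x)^(r+1) = x^p * (1-x)^r - x^(p+1) * (1-x)^r := by
      intro x; rw [pow_succ, pow_succ]; ring
    rw [intervalIntegral.integral_congr (fun x _ => hsplit x)]
    rw [intervalIntegral.integral_sub
      ((Continuous.intervalIntegrable (by fun_prop) 0 1))
      ((Continuous.intervalIntegrable (by fun_prop) 0 1))]
    rw [ih p, ih (p+1)]
    have h1 : ((p + (r+1) + 1).factorial : ℝ) = (p+r+2) * ((p+r+1).factorial) := by
      rw [show p + (r+1) + 1 = (p+r+1)+1 by ring, Nat.factorial_succ]; push_cast; ring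
    have h2 : ((p+1 + r + 1).factorial : ℝ) = (p+r+2) * ((p+r+1).factorial) := by
      rw [show p+1 + r + 1 = (p+r+1)+1 by ring, Nat.factorial_succ]; push_cast; ring
    have h3 : ((p+1).factorial : ℝ) = (p+1) * p.factorial := by
      rw [Nat.factorial_succ]; push_cast; ring
    have h4 : ((r+1).factorial : ℝ) = (r+1) * r.factorial := by
      rw [Nat.factorial_succ]; push_cast; ring
    rw [h1, h2, h3, h4]
    have hf1 : ((p+r+1).factorial : ℝ) ≠ 0 := by positivity
    have hf2 : (0:ℝ) < (p:ℝ)+(r:ℝ)+2 := by positivity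
    field_simp
    ring
  

lemma D_fact (m : ℕ) : DD m * (m.factorial : ℝ) * 2^m = ((2*m).factorial : ℝ) := by
  induction m with
  | zero => simp [DD]
  | succ m ih =>
    have h2 : 2*(m+1) = (2*m+1)+1 := by ring
    rw [h2, Nat.factorial_succ, Nat.factorial_succ, Nat.factorial_succ]
    show (2*(m:ℝ)+1) * DD m * _ * _ = _
    push_cast
    rw [pow_succ, ← ih]
    ring



lemma P_eval (N k : ℕ) (x : ℝ) : (P N k).eval x
    = ∑ b ∈ range (N+1), ((N.choose b : ℕ) : ℝ) * (x^b * (1-x)^(N-b) * ((b:ℝ) - (N:ℝ)*x)^k) := by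
  unfold P
  simp [eval_finset_sum]

lemma pointwise (m n : ℕ) (hn : 2 ≤ n) (x : ℝ) :
    ∑ i ∈ Icc 1 n, (i:ℝ) * (n.choose i : ℝ) *
        ((x - (2*(i:ℝ)-1)/(2*(n:ℝ)))^(2*m) * x^(i-1) * (1-x)^(n-i))
    = (n:ℝ)/(2*(n:ℝ))^(2*m) * ∑ k ∈ range (2*m+1),
        (-2:ℝ)^k * (((2*m).choose k : ℕ) : ℝ) * (2*x-1)^(2*m-k) * (P (n-1) k).eval x := by
  have hn0 : (0:ℝ) < (n:ℝ) := by positivity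
  have hN : ((n-1:ℕ):ℝ) = (n:ℝ) - 1 := by
    rw [Nat.cast_sub (by omega)]; norm_num
  rw [← Finset.Ico_add_one_right_eq_Icc, Finset.sum_Ico_eq_sum_range]
  have hre : ∀ b ∈ range (n+1-1), ((1+b:ℕ):ℝ) * (n.choose (1+b) : ℝ) *
        ((x - (2*((1+b:ℕ):ℝ)-1)/(2*(n:ℝ)))^(2*m) * x^((1+b)-1) * (1-x)^(n-(1+b)))
      = ∑ k ∈ range (2*m+1),
          ((n:ℝ)/(2*(n:ℝ))^(2*m)) * ((-2:ℝ)^k * (((2*m).choose k : ℕ) : ℝ) * (2*x-1)^(2*m-k))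
            * (((n-1).choose b : ℕ) : ℝ) * (x^b * (1-x)^((n-1)-b) * ((b:ℝ) - ((n-1:ℕ):ℝ)*x)^k) := by
    intro b hb
    have hcoef : ((1+b:ℕ):ℝ) * (n.choose (1+b) : ℝ) = (n:ℝ) * ((n-1).choose b : ℝ) := by
      have hnat : n * (n-1).choose b = n.choose (b+1) * (b+1) := by
        have h := Nat.add_one_mul_choose_eq (n-1) b
        rwa [show n - 1 + 1 = n by omega] at h
      have h2 := congrArg (Nat.cast : ℕ → ℝ) hnat
      push_cast at h2
      rw [add_comm 1 b]
      push_cast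
      linarith
    have hexp1 : (1+b) - 1 = b := by omega
    have hexp2 : n - (1+b) = (n-1) - b := by omega
    have hsplit : x - (2*((1+b:ℕ):ℝ)-1)/(2*(n:ℝ))
        = (1/(2*(n:ℝ))) * ((-2)*((b:ℝ) - ((n:ℝ)-1)*x) + (2*x-1)) := by
      field_simp
      push_cast
      ring
    have hpow : (x - (2*((1+b:ℕ):ℝ)-1)/(2*(n:ℝ)))^(2*m)
        = (1/(2*(n:ℝ)))^(2*m) * ∑ k ∈ range (2*m+1),
            (-2:ℝ)^k * ((b:ℝ) - ((n:ℝ)-1)*x)^k * (2*x-1)^(2*m-k) * (((2*m).choose k : ℕ):ℝ) := by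
      rw [hsplit, mul_pow, add_pow]
      refine congrArg _ (Finset.sum_congr rfl fun k hk => ?_)
      rw [mul_pow]
    rw [hcoef, hexp1, hexp2, hpow, Finset.mul_sum, Finset.sum_mul, Finset.sum_mul,
      Finset.mul_sum]
    refine Finset.sum_congr rfl fun k hk => ?_
    rw [hN]
    simp only [one_div, div_eq_mul_inv, mul_inv, mul_pow, inv_pow]
    ring
  rw [Finset.sum_congr rfl hre, Finset.sum_comm, Finset.mul_sum]
  refine Finset.sum_congr rfl fun k hk => ?_
  rw [P_eval, show n - 1 + 1 = n by omega]
  simp only [Finset.mul_sum]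
  refine Finset.sum_congr rfl fun b hb => ?_
  ring

lemma S_eq (m n : ℕ) (hn : 2 ≤ n) :
    ∑ i ∈ Icc 1 n, (i:ℝ) * (n.choose i : ℝ) *
        ∫ x in (0:ℝ)..1, (x - (2*(i:ℝ)-1)/(2*(n:ℝ)))^(2*m) * x^(i-1) * (1-x)^(n-i)
    = (n:ℝ)/(2*(n:ℝ))^(2*m) * ∑ k ∈ range (2*m+1), (-2:ℝ)^k * (((2*m).choose k:ℕ):ℝ) *
        ∑ j ∈ range (k+1), (((n-1:ℕ)):ℝ)^j *
          ∫ x in (0:ℝ)..1, (2*x-1)^(2*m-k) * (g k j).eval x := by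
  have hcont : ∀ (p : ℝ[X]) (r : ℕ),
      IntervalIntegrable (fun x : ℝ => (2*x-1)^r * p.eval x) MeasureTheory.volume 0 1 :=
    fun p r => (Continuous.mul (by fun_prop) p.continuous).intervalIntegrable 0 1
  calc ∑ i ∈ Icc 1 n, (i:ℝ) * (n.choose i : ℝ) *
        ∫ x in (0:ℝ)..1, (x - (2*(i:ℝ)-1)/(2*(n:ℝ)))^(2*m) * x^(i-1) * (1-x)^(n-i)
      = ∑ i ∈ Icc 1 n, ∫ x in (0:ℝ)..1, (i:ℝ) * (n.choose i : ℝ) *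
          ((x - (2*(i:ℝ)-1)/(2*(n:ℝ)))^(2*m) * x^(i-1) * (1-x)^(n-i)) := by
        refine Finset.sum_congr rfl fun i hi => ?_
        rw [intervalIntegral.integral_const_mul]
    _ = ∫ x in (0:ℝ)..1, ∑ i ∈ Icc 1 n, (i:ℝ) * (n.choose i : ℝ) *
          ((x - (2*(i:ℝ)-1)/(2*(n:ℝ)))^(2*m) * x^(i-1) * (1-x)^(n-i)) := by
        rw [intervalIntegral.integral_finset_sum]
        intro i hi
        exact (Continuous.intervalIntegrable (by fun_prop) 0 1)
    _ = ∫ x in (0:ℝ)..1, (n:ℝ)/(2*(n:ℝ))^(2*m) * ∑ k ∈ range (2*m+1),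
          (-2:ℝ)^k * (((2*m).choose k : ℕ) : ℝ) * (2*x-1)^(2*m-k) * (P (n-1) k).eval x := by
        exact intervalIntegral.integral_congr (fun x _ => pointwise m n hn x)
    _ = (n:ℝ)/(2*(n:ℝ))^(2*m) * ∑ k ∈ range (2*m+1), ∫ x in (0:ℝ)..1,
          (-2:ℝ)^k * (((2*m).choose k : ℕ) : ℝ) * ((2*x-1)^(2*m-k) * (P (n-1) k).eval x) := by
        rw [intervalIntegral.integral_const_mul]
        congr 1
        rw [intervalIntegral.integral_finset_sum]
        · refine Finset.sum_congr rfl fun k hk => ?_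
          refine intervalIntegral.integral_congr (fun x _ => ?_)
          ring
        · intro k hk
          exact (Continuous.intervalIntegrable (by fun_prop) 0 1)
    _ = _ := by
        congr 1
        refine Finset.sum_congr rfl fun k hk => ?_
        rw [intervalIntegral.integral_const_mul]
        congr 1
        have hev : ∀ x : ℝ, (P (n-1) k).eval x
            = ∑ j ∈ range (k+1), (((n-1:ℕ)):ℝ)^j * (g k j).eval x := by
          intro x
          rw [P_eq_sum_g]
          simp [eval_finset_sum]
        calc (∫ x in (0:ℝ)..1, (2*x-1)^(2*m-k) * (P (n-1) k).eval x)
            = ∫ x in (0:ℝ)..1, ∑ j ∈ range (k+1),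
                (((n-1:ℕ)):ℝ)^j * ((2*x-1)^(2*m-k) * (g k j).eval x) := by
              refine intervalIntegral.integral_congr (fun x _ => ?_)
              rw [hev x, Finset.mul_sum]
              exact Finset.sum_congr rfl fun j hj => by ring
          _ = ∑ j ∈ range (k+1), (((n-1:ℕ)):ℝ)^j *
                ∫ x in (0:ℝ)..1, (2*x-1)^(2*m-k) * (g k j).eval x := by
              rw [intervalIntegral.integral_finset_sum]
              · exact Finset.sum_congr rfl fun j hj => intervalIntegral.integral_const_mul _ _
              · intro j hj
                exact (continuous_const.mul ((Continuous.pow (by fun_prop) _).mul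
                  (g k j).continuous)).intervalIntegrable 0 1

noncomputable def cInt (m k j : ℕ) : ℝ :=
  ∫ x in (0:ℝ)..1, (2*x-1)^(2*m-k) * (g k j).eval x

noncomputable def Kc (m : ℕ) : ℝ :=
  ∑ k ∈ range (2*m+1), ∑ j ∈ range (k+1), |(-2:ℝ)^k * (((2*m).choose k:ℕ):ℝ) * cInt m k j|

lemma cInt_vanish (m k j : ℕ) (h : k < 2*j) : cInt m k j = 0 := by
  unfold cInt
  rw [g_vanish k j h]
  simp

lemma Kc_nonneg (m : ℕ) : 0 ≤ Kc m :=
  Finset.sum_nonneg fun k _ => Finset.sum_nonneg fun j _ => abs_nonneg _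

lemma T_est (m n : ℕ) (hm : 1 ≤ m) (hn : 2 ≤ n) :
    |(∑ k ∈ range (2*m+1), (-2:ℝ)^k * (((2*m).choose k:ℕ):ℝ) *
        ∑ j ∈ range (k+1), (((n-1:ℕ)):ℝ)^j * cInt m k j)
      - (-2:ℝ)^(2*m) * (((2*m).choose (2*m):ℕ):ℝ) * ((((n-1:ℕ)):ℝ)^m * cInt m (2*m) m)|
    ≤ Kc m * (((n-1:ℕ)):ℝ)^(m-1) := by
  set N : ℝ := (((n-1:ℕ)):ℝ) with hNdef
  have hN1 : (1:ℝ) ≤ N := by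
    rw [hNdef]
    exact_mod_cast Nat.one_le_iff_ne_zero.mpr (by omega)
  have hN0 : (0:ℝ) ≤ N := le_trans zero_le_one hN1
  set t : ℕ → ℕ → ℝ := fun k j => (-2:ℝ)^k * (((2*m).choose k:ℕ):ℝ) * (N^j * cInt m k j)
    with ht
  have hsum : ∑ k ∈ range (2*m+1), (-2:ℝ)^k * (((2*m).choose k:ℕ):ℝ) *
      ∑ j ∈ range (k+1), N^j * cInt m k j = ∑ k ∈ range (2*m+1), ∑ j ∈ range (k+1), t k j := by
    exact Finset.sum_congr rfl fun k _ => Finset.mul_sum _ _ _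
  have hmain : ∑ k ∈ range (2*m+1), ∑ j ∈ range (k+1),
      (if k = 2*m ∧ j = m then t k j else 0) = t (2*m) m := by
    have hin : ∀ k ∈ range (2*m+1), ∑ j ∈ range (k+1), (if k = 2*m ∧ j = m then t k j else 0)
        = if k = 2*m then t (2*m) m else 0 := by
      intro k hk
      by_cases hk2 : k = 2*m
      · rw [if_pos hk2]
        have heq : ∀ j, (if k = 2*m ∧ j = m then t k j else 0) = (if j = m then t k j else 0) := by
          intro j; by_cases hj : j = m <;> simp [hj, hk2]
        rw [Finset.sum_congr rfl fun j _ => heq j]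
        rw [Finset.sum_ite_eq' (range (k+1)) m (fun j => t k j)]
        rw [if_pos (Finset.mem_range.mpr (by omega)), hk2]
      · rw [if_neg hk2]
        refine Finset.sum_eq_zero fun j _ => ?_
        rw [if_neg (by tauto)]
    rw [Finset.sum_congr rfl hin, Finset.sum_ite_eq' (range (2*m+1)) (2*m) (fun k => t (2*m) m),
      if_pos (Finset.mem_range.mpr (by omega))]
  rw [hsum]
  have hgoal : (-2:ℝ)^(2*m) * ((((2*m).choose (2*m)):ℕ):ℝ) * (N^m * cInt m (2*m) m)
      = t (2*m) m := rfl
  rw [hgoal, ← hmain, ← Finset.sum_sub_distrib]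
  have : ∀ k ∈ range (2*m+1), (∑ j ∈ range (k+1), t k j) -
      (∑ j ∈ range (k+1), (if k = 2*m ∧ j = m then t k j else 0))
      = ∑ j ∈ range (k+1), (t k j - (if k = 2*m ∧ j = m then t k j else 0)) := by
    intro k _; rw [Finset.sum_sub_distrib]
  rw [Finset.sum_congr rfl this]
  refine le_trans (Finset.abs_sum_le_sum_abs _ _) ?_
  unfold Kc
  rw [Finset.sum_mul]
  refine Finset.sum_le_sum fun k hk => ?_
  refine le_trans (Finset.abs_sum_le_sum_abs _ _) ?_
  rw [Finset.sum_mul]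
  refine Finset.sum_le_sum fun j hj => ?_
  have hbound : (0:ℝ) ≤ |(-2:ℝ)^k * (((2*m).choose k:ℕ):ℝ) * cInt m k j| * N^(m-1) := by
    have := pow_nonneg hN0 (m-1)
    positivity
  by_cases hmj : k = 2*m ∧ j = m
  · rw [if_pos hmj]
    simpa using hbound
  · rw [if_neg hmj, sub_zero]
    by_cases hvan : k < 2*j
    · rw [ht]
      simp only
      rw [cInt_vanish m k j hvan]
      simpa using hbound
    · -- 2*j ≤ k ≤ 2*m, (k,j) ≠ (2*m,m) ⟹ j ≤ m-1
      have hkm : k ≤ 2*m := by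
        have := Finset.mem_range.mp hk; omega
      have hjm : j ≤ m - 1 := by
        push_neg at hvan
        rcases Nat.lt_or_ge j m with h | h
        · omega
        · exfalso
          have hjm' : j = m := by omega
          have : k = 2*m := by omega
          exact hmj ⟨this, hjm'⟩
      have h1 : |t k j| = |(-2:ℝ)^k * (((2*m).choose k:ℕ):ℝ) * cInt m k j| * N^j := by
        rw [ht]
        simp only
        rw [show (-2:ℝ)^k * (((2*m).choose k:ℕ):ℝ) * (N^j * cInt m k j)
            = ((-2:ℝ)^k * (((2*m).choose k:ℕ):ℝ) * cInt m k j) * N^j by ring]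
        rw [abs_mul, abs_of_nonneg (pow_nonneg hN0 j)]
      rw [h1]
      exact mul_le_mul_of_nonneg_left (pow_le_pow_right₀ hN1 hjm) (abs_nonneg _)

lemma cInt_main (m : ℕ) :
    cInt m (2*m) m = DD m * ((m.factorial:ℝ) * m.factorial / ((m+m+1).factorial)) := by
  unfold cInt
  rw [Nat.sub_self, g_top]
  have hpt : ∀ x:ℝ, (2*x-1)^0 * (Polynomial.C (DD m) * (X*(1-X))^m).eval x
      = DD m * (x^m * (1-x)^m) := by
    intro x
    simp [mul_pow]
  rw [intervalIntegral.integral_congr (fun x _ => hpt x),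
    intervalIntegral.integral_const_mul, beta_integral]

lemma hDD (m : ℕ) : DD m * ((m.factorial:ℝ) * m.factorial / ((m+m+1).factorial))
    = (m.factorial:ℝ)/(2^m*(1+2*(m:ℝ))) := by
  have h1 : ((m+m+1).factorial:ℝ) = (1+2*(m:ℝ)) * ((2*m).factorial:ℝ) := by
    rw [show m+m+1 = (2*m)+1 by ring, Nat.factorial_succ]
    push_cast
    ring
  have h2 := D_fact m
  have hf : ((2*m).factorial:ℝ) ≠ 0 := Nat.cast_ne_zero.mpr (Nat.factorial_ne_zero _)
  have hmf : (m.factorial:ℝ) ≠ 0 := Nat.cast_ne_zero.mpr (Nat.factorial_ne_zero _)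
  have h3 : (0:ℝ) < 1+2*(m:ℝ) := by positivity
  have h4 : (2:ℝ)^m ≠ 0 := by positivity
  rw [h1]
  field_simp
  linear_combination h2

lemma key (m n : ℕ) (hm : 1 ≤ m) (hn : 2 ≤ n) :
    |(∑ i ∈ Icc 1 n, (i:ℝ) * (n.choose i : ℝ) *
        ∫ x in (0:ℝ)..1, (x - (2*(i:ℝ)-1)/(2*(n:ℝ)))^(2*m) * x^(i-1) * (1-x)^(n-i))
      - ((m.factorial:ℝ)/(2^m*(1+2*(m:ℝ)))) * ((n:ℝ) / (n:ℝ)^m)|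
    ≤ (Kc m / 2^(2*m) + (m.factorial:ℝ)/(2^m*(1+2*(m:ℝ))) * m) / (n:ℝ)^m := by
  have hn0 : (0:ℝ) < (n:ℝ) := by positivity
  set c : ℝ := (m.factorial:ℝ)/(2^m*(1+2*(m:ℝ))) with hcdef
  have hc0 : 0 ≤ c := by positivity
  set N : ℝ := (((n-1:ℕ)):ℝ) with hNdef
  have hN : N = (n:ℝ) - 1 := by
    rw [hNdef, Nat.cast_sub (by omega)]
    norm_num
  have hn2 : (2:ℝ) ≤ (n:ℝ) := by exact_mod_cast hn
  have hN1 : (1:ℝ) ≤ N := by rw [hN]; linarith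
  have hN0 : (0:ℝ) ≤ N := by linarith
  have hNn : N ≤ (n:ℝ) := by rw [hN]; linarith
  set T : ℝ := ∑ k ∈ range (2*m+1), (-2:ℝ)^k * (((2*m).choose k:ℕ):ℝ) *
      ∑ j ∈ range (k+1), N^j * cInt m k j with hTdef
  set mn : ℝ := (-2:ℝ)^(2*m) * (((2*m).choose (2*m):ℕ):ℝ) * (N^m * cInt m (2*m) m) with hmndef
  have hS : ∑ i ∈ Icc 1 n, (i:ℝ) * (n.choose i : ℝ) *
        ∫ x in (0:ℝ)..1, (x - (2*(i:ℝ)-1)/(2*(n:ℝ)))^(2*m) * x^(i-1) * (1-x)^(n-i)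
      = (n:ℝ)/(2*(n:ℝ))^(2*m) * T := by
    rw [S_eq m n hn]
    rfl
  have hTb : |T - mn| ≤ Kc m * N^(m-1) := T_est m n hm hn
  -- main value computation
  have hpow2 : ((-2:ℝ))^(2*m) = (2:ℝ)^(2*m) := by
    rw [pow_mul, pow_mul]
    norm_num
  have hmainv : (n:ℝ)/(2*(n:ℝ))^(2*m) * mn = c * ((n:ℝ) * N^m / (n:ℝ)^(2*m)) := by
    rw [hmndef, cInt_main, hDD, ← hcdef, Nat.choose_self, hpow2, mul_pow (2:ℝ) (n:ℝ) (2*m)]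
    have h2 : ((2:ℝ))^(2*m) ≠ 0 := by positivity
    have h3 : ((n:ℝ))^(2*m) ≠ 0 := by positivity
    field_simp
    ring
  -- split
  have hsplit : (n:ℝ)/(2*(n:ℝ))^(2*m) * T - c * ((n:ℝ)/(n:ℝ)^m)
      = (n:ℝ)/(2*(n:ℝ))^(2*m) * (T - mn) + (c * ((n:ℝ) * N^m / (n:ℝ)^(2*m)) - c * ((n:ℝ)/(n:ℝ)^m)) := by
    rw [← hmainv]
    ring
  rw [hS, hsplit]
  have hcoef0 : (0:ℝ) ≤ (n:ℝ)/(2*(n:ℝ))^(2*m) := by positivity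
  have hnn : (n:ℝ) * (n:ℝ)^(m-1) = (n:ℝ)^m := by
    rw [← pow_succ']
    congr 1
    omega
  have hn2m : ((n:ℝ))^(2*m) = (n:ℝ)^m * (n:ℝ)^m := by
    rw [← pow_add]
    congr 1
    omega
  -- first term bound
  have hb1 : |(n:ℝ)/(2*(n:ℝ))^(2*m) * (T - mn)| ≤ (Kc m / 2^(2*m)) / (n:ℝ)^m := by
    rw [abs_mul, abs_of_nonneg hcoef0]
    have h1 : |T - mn| ≤ Kc m * (n:ℝ)^(m-1) :=
      le_trans hTb (mul_le_mul_of_nonneg_left (pow_le_pow_left₀ hN0 hNn _) (Kc_nonneg m))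
    refine le_trans (mul_le_mul_of_nonneg_left h1 hcoef0) (le_of_eq ?_)
    rw [mul_pow (2:ℝ) (n:ℝ) (2*m)]
    calc (n:ℝ)/((2:ℝ)^(2*m)*(n:ℝ)^(2*m)) * (Kc m * (n:ℝ)^(m-1))
        = Kc m * ((n:ℝ)*(n:ℝ)^(m-1)) / ((2:ℝ)^(2*m)*(n:ℝ)^(2*m)) := by ring
      _ = Kc m * (n:ℝ)^m / ((2:ℝ)^(2*m)*((n:ℝ)^m*(n:ℝ)^m)) := by rw [hnn, ← hn2m]
      _ = (Kc m / 2^(2*m)) / (n:ℝ)^m := by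
          have h4 : ((n:ℝ))^m ≠ 0 := by positivity
          have h5 : ((2:ℝ))^(2*m) ≠ 0 := by positivity
          field_simp
  -- second term bound
  have hBer : (n:ℝ)^m - N^m ≤ (m:ℝ) * (n:ℝ)^(m-1) := by
    have h1 : (1:ℝ) + (m:ℝ) * (-(1/(n:ℝ))) ≤ (1 + (-(1/(n:ℝ))))^m := by
      refine one_add_mul_le_pow ?_ m
      have : 0 < 1/(n:ℝ) := by positivity
      have : 1/(n:ℝ) ≤ 1 := by
        rw [div_le_one hn0]; linarith
      linarith
    have h2 : ((1:ℝ) + (-(1/(n:ℝ))))^m * (n:ℝ)^m = N^m := by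
      rw [← mul_pow, hN]
      congr 1
      field_simp
      ring
    have h3 : ((1:ℝ) + (m:ℝ) * (-(1/(n:ℝ)))) * (n:ℝ)^m = (n:ℝ)^m - (m:ℝ) * (n:ℝ)^(m-1) := by
      rw [← hnn]
      field_simp
      ring
    nlinarith [mul_le_mul_of_nonneg_right h1 (le_of_lt (pow_pos hn0 m))]
  have hNmn : N^m ≤ (n:ℝ)^m := pow_le_pow_left₀ hN0 hNn m
  have hb2 : |c * ((n:ℝ) * N^m / (n:ℝ)^(2*m)) - c * ((n:ℝ)/(n:ℝ)^m)| ≤ (c * m) / (n:ℝ)^m := by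
    have heq : c * ((n:ℝ)/(n:ℝ)^m) - c * ((n:ℝ) * N^m / (n:ℝ)^(2*m))
        = c * (n:ℝ) / (n:ℝ)^(2*m) * ((n:ℝ)^m - N^m) := by
      rw [hn2m]
      field_simp
    rw [abs_sub_comm, heq, abs_mul]
    have hco : (0:ℝ) ≤ c * (n:ℝ) / (n:ℝ)^(2*m) := by positivity
    rw [abs_of_nonneg hco, abs_of_nonneg (by linarith [hNmn] : (0:ℝ) ≤ (n:ℝ)^m - N^m)]
    refine le_trans (mul_le_mul_of_nonneg_left hBer hco) (le_of_eq ?_)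
    calc c * (n:ℝ) / (n:ℝ)^(2*m) * ((m:ℝ) * (n:ℝ)^(m-1))
        = c * (m:ℝ) * ((n:ℝ)*(n:ℝ)^(m-1)) / (n:ℝ)^(2*m) := by ring
      _ = c * (m:ℝ) * (n:ℝ)^m / ((n:ℝ)^m*(n:ℝ)^m) := by rw [hnn, ← hn2m]
      _ = (c * m) / (n:ℝ)^m := by
          have h4 : ((n:ℝ))^m ≠ 0 := by positivity
          field_simp
  calc |(n:ℝ)/(2*(n:ℝ))^(2*m) * (T - mn) + (c * ((n:ℝ) * N^m / (n:ℝ)^(2*m)) - c * ((n:ℝ)/(n:ℝ)^m))|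
      ≤ |(n:ℝ)/(2*(n:ℝ))^(2*m) * (T - mn)| + |c * ((n:ℝ) * N^m / (n:ℝ)^(2*m)) - c * ((n:ℝ)/(n:ℝ)^m)| :=
        abs_add_le _ _
    _ ≤ (Kc m / 2^(2*m)) / (n:ℝ)^m + (c * m) / (n:ℝ)^m := add_le_add hb1 hb2
    _ = (Kc m / 2^(2*m) + c * m) / (n:ℝ)^m := by rw [← add_div]

end Stmt1Aux

open Stmt1Aux Finset in
/-- For an even positive integer `a`, the expected total displacement to the
power `a` of the order statistics of `n` uniform points on `[0,1]` to the anchors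
`tᵢ = (2i-1)/(2n)` equals `(a/2)!/(2^{a/2}(1+a)) · n^{1-a/2} + O(n^{-a/2})`. -/
theorem stmt1 (a : ℕ) (ha : 0 < a) (hae : Even a) :
    ∃ C > 0, ∃ N : ℕ, ∀ n : ℕ, N ≤ n →
      |(∑ i ∈ Finset.Icc 1 n, (i : ℝ) * (n.choose i : ℝ) *
            ∫ x in (0:ℝ)..1,
              |x - (2 * (i : ℝ) - 1) / (2 * n)| ^ a * x ^ (i - 1) * (1 - x) ^ (n - i))
          - ((Nat.factorial (a / 2) : ℝ) / (2 ^ (a / 2) * (1 + (a : ℝ)))) *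
              (n : ℝ) ^ ((1 : ℝ) - (a : ℝ) / 2)|
        ≤ C * (n : ℝ) ^ (-(a : ℝ) / 2) := by
  rcases hae with ⟨r, hr⟩
  subst hr
  have hm1 : 1 ≤ r := by omega
  have hB0 : 0 ≤ Kc r / 2^(2*r) + (r.factorial:ℝ)/(2^r*(1+2*(r:ℝ))) * r := by
    have h1 : 0 ≤ Kc r / 2^(2*r) := div_nonneg (Kc_nonneg r) (by positivity)
    have h2 : 0 ≤ (r.factorial:ℝ)/(2^r*(1+2*(r:ℝ))) * r := by positivity
    linarith
  refine ⟨Kc r / 2^(2*r) + (r.factorial:ℝ)/(2^r*(1+2*(r:ℝ))) * r + 1, by linarith, 2,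
    fun n hn => ?_⟩
  have hn0 : (0:ℝ) < (n:ℝ) := by
    have : (2:ℝ) ≤ (n:ℝ) := by exact_mod_cast hn
    linarith
  have hae' : Even (r+r) := ⟨r, rfl⟩
  simp only [hae'.pow_abs]
  simp only [show r + r = 2*r from by ring]
  simp only [show 2*r/2 = r from by omega]
  have e3 : (1 + ((2*r:ℕ):ℝ)) = 1 + 2*(r:ℝ) := by push_cast; ring
  rw [e3]
  have e1 : (n:ℝ) ^ ((1:ℝ) - ((2*r:ℕ):ℝ)/2) = (n:ℝ)/(n:ℝ)^r := by
    rw [show (1:ℝ) - ((2*r:ℕ):ℝ)/2 = 1 - (r:ℝ) from by push_cast; ring]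
    rw [Real.rpow_sub hn0, Real.rpow_one, Real.rpow_natCast]
  have e2 : (n:ℝ) ^ (-((2*r:ℕ):ℝ)/2) = ((n:ℝ)^r)⁻¹ := by
    rw [show -((2*r:ℕ):ℝ)/2 = -(r:ℝ) from by push_cast; ring]
    rw [Real.rpow_neg (le_of_lt hn0), Real.rpow_natCast]
  rw [e1, e2]
  have hkey := key r n hm1 hn
  refine le_trans hkey ?_
  rw [← div_eq_mul_inv]
  exact (div_le_div_iff_of_pos_right (pow_pos hn0 r)).mpr (by linarith)
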